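/- If T is a P-valid plane tree different from the greedy tree T₀, then T admits at least one valid local move of type 2. -/

import Mathlib

/-!
Model: a plane tree with n edges is encoded as a non-crossing perfect matching
on the 2n half-edge positions 0,…,2n-1 (0-indexed); a matched pair (i,j) with
i < j is the edge e(i,j) with left half-edge i and right half-edge j.
-/

/-- `M` is a perfect matching on positions `0,…,2n-1`. -/
def IsMatching (n : ℕ) (M : Finset (ℕ × ℕ)) : Prop :=
  (∀ p ∈ M, p.1 < p.2 ∧ p.2 < 2 * n) ∧
  (∀ k, k < 2 * n → ∃! p, p ∈ M ∧ (p.1 = k ∨ p.2 = k))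

/-- No two matched pairs cross. -/
def NonCrossing (M : Finset (ℕ × ℕ)) : Prop :=
  ∀ p ∈ M, ∀ q ∈ M, ¬ (p.1 < q.1 ∧ q.1 < p.2 ∧ p.2 < q.2)

/-- A plane tree on `n` edges: a non-crossing perfect matching on `0,…,2n-1`. -/
def IsPlaneTree (n : ℕ) (M : Finset (ℕ × ℕ)) : Prop :=
  IsMatching n M ∧ NonCrossing M

/-- The plane tree `M` is valid for the word `P` (with complementation `comp`):
every matched pair consists of complementary letters. -/
def IsValid {A : Type*} (P : ℕ → A) (comp : A → A) (M : Finset (ℕ × ℕ)) : Prop :=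
  ∀ p ∈ M, P p.2 = comp (P p.1)

/-- One pass of the greedy algorithm over positions `0,…,N-1`:
state is (stack of currently unmatched positions, most recent first;
list of matched pairs `(j,i)` with `j < i`). At each position `i`, if the most
recent unmatched position `j` carries a complementary letter, match `(j,i)`;
otherwise leave `i` unmatched. -/
def greedy {A : Type*} [DecidableEq A] (P : ℕ → A) (comp : A → A) :
    ℕ → List ℕ × List (ℕ × ℕ)
  | 0 => ([], [])
  | (i+1) =>
    let s := greedy P comp i
    match s.1 with
    | [] => ([i], s.2)
    | j :: rest =>
      if P i = comp (P j) then (rest, (j, i) :: s.2)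
      else (i :: j :: rest, s.2)

/-- The partial matching produced by the greedy algorithm on a word of length `2n`. -/
def greedyMatching {A : Type*} [DecidableEq A] (P : ℕ → A) (comp : A → A) (n : ℕ) :
    Finset (ℕ × ℕ) :=
  ((greedy P comp (2 * n)).2).toFinset

/-- A local move of type 2: two nested *adjacent* edges `e(i,j')`, `e(j,i')`
with `i < j < i' < j'` (adjacency: no edge lies strictly between them, i.e. no
edge `(a,b)` with `i < a < j` and `i' < b < j'`) are replaced by `e(i,j)` and
`e(i',j')`. -/
def Type2Move (M M' : Finset (ℕ × ℕ)) : Prop :=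
  ∃ i j i' j', i < j ∧ j < i' ∧ i' < j' ∧
    (i, j') ∈ M ∧ (j, i') ∈ M ∧
    (¬ ∃ q ∈ M, i < q.1 ∧ q.1 < j ∧ i' < q.2 ∧ q.2 < j') ∧
    M' = insert (i, j) (insert (i', j') ((M.erase (i, j')).erase (j, i')))

/-- A valid local move of type 2: a type 2 move whose initial and resulting
plane trees are both `P`-valid. -/
def ValidType2Move {A : Type*} (P : ℕ → A) (comp : A → A)
    (M M' : Finset (ℕ × ℕ)) : Prop :=
  Type2Move M M' ∧ IsValid P comp M ∧ IsValid P comp M'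

/-- Auxiliary: a "configuration" in `T`: two nested adjacent edges
`(a,d)` and `(b,c)` with `a<b<c<d` where `P b = comp (P a)`. -/
def Config {A : Type*} (P : ℕ → A) (comp : A → A) (T : Finset (ℕ × ℕ)) : Prop :=
  ∃ a b c d : ℕ, a < b ∧ b < c ∧ c < d ∧ (a, d) ∈ T ∧ (b, c) ∈ T ∧
    P b = comp (P a) ∧ ¬ ∃ q ∈ T, a < q.1 ∧ q.1 < b ∧ c < q.2 ∧ q.2 < d

lemma config_move {A : Type*} (comp : A → A) (hinv : Function.Involutive comp)
    (n : ℕ) (P : ℕ → A) (T : Finset (ℕ × ℕ))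
    (hT : IsPlaneTree n T) (hval : IsValid P comp T)
    (hC : Config P comp T) :
    ∃ T', IsPlaneTree n T' ∧ ValidType2Move P comp T T' := by
  obtain ⟨a, b, c, d, hab, hbc, hcd, hadT, hbcT, hPb, hadj⟩ := hC
  obtain ⟨⟨hbd, hcov⟩, hnc⟩ := hT
  have hd2 : d < 2 * n := (hbd (a, d) hadT).2
  have hc2 : c < 2 * n := (hbd (b, c) hbcT).2
  set T' : Finset (ℕ × ℕ) :=
    insert (a, b) (insert (c, d) ((T.erase (a, d)).erase (b, c))) with hT'def
  have hmem : ∀ p : ℕ × ℕ, p ∈ T' ↔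
      p = (a, b) ∨ p = (c, d) ∨ (p ∈ T ∧ p ≠ (a, d) ∧ p ≠ (b, c)) := by
    intro p
    simp only [hT'def, Finset.mem_insert, Finset.mem_erase]
    tauto
  have cvu : ∀ m, m < 2 * n → ∀ p ∈ T, ∀ q ∈ T,
      (p.1 = m ∨ p.2 = m) → (q.1 = m ∨ q.2 = m) → p = q := by
    intro m hm p hp q hq hpc hqc
    obtain ⟨r, -, hru⟩ := hcov m hm
    rw [hru p ⟨hp, hpc⟩, hru q ⟨hq, hqc⟩]
  have cvA : ∀ p ∈ T, (p.1 = a ∨ p.2 = a) → p = (a, d) := fun p hp h =>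
    cvu a (by omega) p hp (a, d) hadT h (Or.inl rfl)
  have cvB : ∀ p ∈ T, (p.1 = b ∨ p.2 = b) → p = (b, c) := fun p hp h =>
    cvu b (by omega) p hp (b, c) hbcT h (Or.inl rfl)
  have cvC : ∀ p ∈ T, (p.1 = c ∨ p.2 = c) → p = (b, c) := fun p hp h =>
    cvu c (by omega) p hp (b, c) hbcT h (Or.inr rfl)
  have cvD : ∀ p ∈ T, (p.1 = d ∨ p.2 = d) → p = (a, d) := fun p hp h =>
    cvu d (by omega) p hp (a, d) hadT h (Or.inr rfl)
  refine ⟨T', ⟨⟨?_, ?_⟩, ?_⟩, ?_, hval, ?_⟩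
  · -- bounds
    intro p hp
    rcases (hmem p).1 hp with rfl | rfl | ⟨hpT, -, -⟩
    · exact ⟨hab, by omega⟩
    · exact ⟨hcd, hd2⟩
    · exact hbd p hpT
  · -- unique cover
    intro m hm
    by_cases hma : m = a
    · rw [hma]
      refine ⟨(a, b), ⟨(hmem _).2 (Or.inl rfl), Or.inl rfl⟩, ?_⟩
      rintro q ⟨hq, hqc⟩
      rcases (hmem q).1 hq with rfl | rfl | ⟨hqT, hne1, -⟩
      · rfl
      · omega
      · exact absurd (cvA q hqT hqc) hne1
    by_cases hmb : m = b
    · rw [hmb]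
      refine ⟨(a, b), ⟨(hmem _).2 (Or.inl rfl), Or.inr rfl⟩, ?_⟩
      rintro q ⟨hq, hqc⟩
      rcases (hmem q).1 hq with rfl | rfl | ⟨hqT, -, hne2⟩
      · rfl
      · omega
      · exact absurd (cvB q hqT hqc) hne2
    by_cases hmc : m = c
    · rw [hmc]
      refine ⟨(c, d), ⟨(hmem _).2 (Or.inr (Or.inl rfl)), Or.inl rfl⟩, ?_⟩
      rintro q ⟨hq, hqc⟩
      rcases (hmem q).1 hq with rfl | rfl | ⟨hqT, -, hne2⟩
      · omega
      · rfl
      · exact absurd (cvC q hqT hqc) hne2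
    by_cases hmd : m = d
    · rw [hmd]
      refine ⟨(c, d), ⟨(hmem _).2 (Or.inr (Or.inl rfl)), Or.inr rfl⟩, ?_⟩
      rintro q ⟨hq, hqc⟩
      rcases (hmem q).1 hq with rfl | rfl | ⟨hqT, hne1, -⟩
      · omega
      · rfl
      · exact absurd (cvD q hqT hqc) hne1
    · obtain ⟨p₀, ⟨hp₀T, hp₀c⟩, hp₀u⟩ := hcov m hm
      have hne1 : p₀ ≠ (a, d) := by rintro rfl; omega
      have hne2 : p₀ ≠ (b, c) := by rintro rfl; omega
      refine ⟨p₀, ⟨(hmem _).2 (Or.inr (Or.inr ⟨hp₀T, hne1, hne2⟩)), hp₀c⟩, ?_⟩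
      rintro q ⟨hq, hqc⟩
      rcases (hmem q).1 hq with rfl | rfl | ⟨hqT, -, -⟩
      · omega
      · omega
      · exact hp₀u q ⟨hqT, hqc⟩
  · -- non-crossing
    intro p hp q hq
    rcases (hmem p).1 hp with rfl | rfl | ⟨hpT, hp1, hp2⟩ <;>
      rcases (hmem q).1 hq with rfl | rfl | ⟨hqT, hq1, hq2⟩
    · omega
    · omega
    · -- p = (a,b), q = r ∈ T
      rintro ⟨h1, h2, h3⟩
      have hr2c : q.2 ≠ c := fun h => hq2 (cvC q hqT (Or.inr h))
      have h4 : ¬(q.1 < b ∧ b < q.2 ∧ q.2 < c) := hnc q hqT (b, c) hbcT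
      have hr2d : q.2 ≠ d := fun h => hq1 (cvD q hqT (Or.inr h))
      have h5 : ¬(a < q.1 ∧ q.1 < d ∧ d < q.2) := hnc (a, d) hadT q hqT
      exact hadj ⟨q, hqT, h1, h2, by omega, by omega⟩
    · omega
    · omega
    · -- p = (c,d), q = r ∈ T
      rintro ⟨h1, h2, h3⟩
      exact hnc (a, d) hadT q hqT ⟨by omega, h2, h3⟩
    · -- p = r, q = (a,b)
      rintro ⟨h1, h2, h3⟩
      exact hnc p hpT (a, d) hadT ⟨h1, h2, by omega⟩
    · -- p = r, q = (c,d)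
      rintro ⟨h1, h2, h3⟩
      have hna : p.1 ≠ a := fun h => hp1 (cvA p hpT (Or.inl h))
      have hnb : p.1 ≠ b := fun h => hp2 (cvB p hpT (Or.inl h))
      have t1 : ¬(p.1 < a ∧ a < p.2 ∧ p.2 < d) := hnc p hpT (a, d) hadT
      have t2 : ¬(b < p.1 ∧ p.1 < c ∧ c < p.2) := hnc (b, c) hbcT p hpT
      exact hadj ⟨p, hpT, by omega, by omega, h2, h3⟩
    · exact hnc p hpT q hqT
  · -- Type2Move
    exact ⟨a, b, c, d, hab, hbc, hcd, hadT, hbcT, hadj, hT'def⟩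
  · -- validity of T'
    intro p hp
    rcases (hmem p).1 hp with rfl | rfl | ⟨hpT, -, -⟩
    · exact hPb
    · have h1 : P d = comp (P a) := hval (a, d) hadT
      have h2 : P c = comp (P b) := hval (b, c) hbcT
      show P d = comp (P c)
      rw [h1, h2, hPb, hinv]
    · exact hval p hpT
lemma greedy_inv {A : Type*} [DecidableEq A] (P : ℕ → A) (comp : A → A)
    (T : Finset (ℕ × ℕ)) (n : ℕ)
    (hT : IsPlaneTree n T) (hval : IsValid P comp T)
    (hC : ¬ Config P comp T) :
    ∀ k, k ≤ 2 * n →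
      (∀ p : ℕ × ℕ, p ∈ (greedy P comp k).2 ↔ p ∈ T ∧ p.2 < k) ∧
      (∀ x, x ∈ (greedy P comp k).1 ↔ x < k ∧ ∃ e, (x, e) ∈ T ∧ k ≤ e) ∧
      List.Pairwise (· > ·) (greedy P comp k).1 := by
  obtain ⟨⟨hbd, hcov⟩, hnc⟩ := hT
  intro k
  induction k with
  | zero => simp [greedy]
  | succ k ih =>
    intro hk
    obtain ⟨ihL, ihS, ihSort⟩ := ih (by omega)
    have hg : greedy P comp (k + 1) = (match (greedy P comp k).1 with
      | [] => ([k], (greedy P comp k).2)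
      | j :: rest =>
        if P k = comp (P j) then (rest, (j, k) :: (greedy P comp k).2)
        else (k :: j :: rest, (greedy P comp k).2)) := rfl
    obtain ⟨p, ⟨hpT, hpc⟩, hpu⟩ := hcov k (by omega)
    have hplt : p.1 < p.2 := (hbd p hpT).1
    have hp2n : p.2 < 2 * n := (hbd p hpT).2
    have huk : ∀ q ∈ T, (q.1 = k ∨ q.2 = k) → q = p := fun q hq h => hpu q ⟨hq, h⟩
    cases hstk : (greedy P comp k).1 with
    | nil =>
      -- no open positions at time k, so p.1 = k
      have hp1k : p.1 = k := by
        rcases hpc with h | h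
        · exact h
        · exfalso
          have hmem : p.1 ∈ (greedy P comp k).1 := by
            rw [ihS]
            exact ⟨by omega, p.2, hpT, by omega⟩
          rw [hstk] at hmem; simp at hmem
      rw [hg, hstk]
      refine ⟨?_, ?_, by simp⟩
      · intro q
        rw [ihL]
        constructor
        · rintro ⟨hq, h2⟩; exact ⟨hq, by omega⟩
        · rintro ⟨hq, h2⟩
          refine ⟨hq, ?_⟩
          rcases Nat.lt_or_ge q.2 k with h | h
          · exact h
          · exfalso
            have hq2k : q.2 = k := by omega
            have heq := huk q hq (Or.inr hq2k)
            subst heq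
            omega
      · intro x
        simp only [List.mem_singleton]
        constructor
        · rintro rfl
          refine ⟨by omega, p.2, ?_, by omega⟩
          rw [← hp1k]; exact hpT
        · rintro ⟨hx, e, heT, he⟩
          by_contra hxk
          have hmem : x ∈ (greedy P comp k).1 := by
            rw [ihS]; exact ⟨by omega, e, heT, by omega⟩
          rw [hstk] at hmem; simp at hmem
    | cons t rest =>
      have htop : t ∈ (greedy P comp k).1 := by rw [hstk]; simp
      obtain ⟨htk, u, htuT, hku⟩ := (ihS t).1 htop
      have hmax : ∀ x ∈ (greedy P comp k).1, x ≤ t := by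
        intro x hx
        rw [hstk] at hx
        rcases List.mem_cons.1 hx with rfl | hx
        · exact le_refl x
        · have hsort := ihSort
          rw [hstk] at hsort
          exact le_of_lt ((List.pairwise_cons.1 hsort).1 x hx)
      have hrestsort : List.Pairwise (· > ·) rest := by
        have hsort := ihSort; rw [hstk] at hsort
        exact (List.pairwise_cons.1 hsort).2
      have htrest : t ∉ rest := by
        intro h
        have hsort := ihSort; rw [hstk] at hsort
        exact absurd ((List.pairwise_cons.1 hsort).1 t h) (lt_irrefl t)
      by_cases hPk : P k = comp (P t)
      · -- greedy matches (t, k); claim p = (t, k)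
        have hp2k : p.2 = k := by
          rcases hpc with h | h
          · -- p.1 = k : k opens, derive a configuration, contradiction
            exfalso
            have hunek : u ≠ k := by
              intro he
              have h1 := huk (t, u) htuT (Or.inr he)
              rw [Prod.ext_iff] at h1
              omega
            have hunep2 : u ≠ p.2 := by
              intro he
              obtain ⟨r, -, hru⟩ := hcov p.2 hp2n
              have e1 := hru (t, u) ⟨htuT, Or.inr he⟩
              have e2 := hru p ⟨hpT, Or.inr rfl⟩
              rw [← e2, Prod.ext_iff] at e1
              omega
            have hcr : ¬(t < p.1 ∧ p.1 < u ∧ u < p.2) := hnc (t, u) htuT p hpT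
            have hp2u : p.2 < u := by omega
            apply hC
            refine ⟨t, k, p.2, u, htk, by omega, hp2u, htuT, ?_, hPk, ?_⟩
            · rw [← h]; exact hpT
            · rintro ⟨q, hq, h1, h2, h3, h4⟩
              have hqs : q.1 ∈ (greedy P comp k).1 := by
                rw [ihS]
                exact ⟨h2, q.2, hq, by omega⟩
              exact absurd (hmax _ hqs) (by omega)
          · exact h
        have hp1t : p.1 = t := by
          have hp1stk : p.1 ∈ (greedy P comp k).1 := by
            rw [ihS]
            exact ⟨by omega, p.2, hpT, by omega⟩
          have hle : p.1 ≤ t := hmax _ hp1stk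
          by_contra hne
          have hlt : p.1 < t := by omega
          have hunek : u ≠ k := by
            intro he
            have h1 := huk (t, u) htuT (Or.inr he)
            rw [Prod.ext_iff] at h1
            omega
          exact hnc p hpT (t, u) htuT ⟨hlt, by omega, by omega⟩
        have hpeq : p = (t, k) := by
          rw [Prod.ext_iff]; exact ⟨hp1t, hp2k⟩
        rw [hg, hstk]
        simp only [hPk, if_true]
        refine ⟨?_, ?_, hrestsort⟩
        · intro q
          simp only [List.mem_cons]
          rw [ihL]
          constructor
          · rintro (rfl | ⟨hq, h2⟩)
            · rw [← hpeq]; exact ⟨hpT, by omega⟩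
            · exact ⟨hq, by omega⟩
          · rintro ⟨hq, h2⟩
            rcases Nat.lt_or_ge q.2 k with h | h
            · exact Or.inr ⟨hq, h⟩
            · have hq2k : q.2 = k := by omega
              left
              rw [huk q hq (Or.inr hq2k), hpeq]
        · intro x
          constructor
          · intro hx
            have hxstk : x ∈ (greedy P comp k).1 := by rw [hstk]; simp [hx]
            obtain ⟨hxk, e, heT, he⟩ := (ihS x).1 hxstk
            have hxt : x ≠ t := by
              intro he'; rw [he'] at hx; exact htrest hx
            have hek : e ≠ k := by
              intro he'
              have h1 := huk (x, e) heT (Or.inr he')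
              rw [hpeq, Prod.ext_iff] at h1
              omega
            exact ⟨by omega, e, heT, by omega⟩
          · rintro ⟨hx, e, heT, he⟩
            have hxk : x ≠ k := by
              intro he'
              have h1 := huk (x, e) heT (Or.inl he')
              rw [hpeq, Prod.ext_iff] at h1
              omega
            have hxstk : x ∈ (greedy P comp k).1 := by
              rw [ihS]; exact ⟨by omega, e, heT, by omega⟩
            have hxt : x ≠ t := by
              intro he'
              obtain ⟨r, -, hru⟩ := hcov t (by omega)
              have e1 := hru (x, e) ⟨heT, Or.inl (by omega)⟩
              have e2 := hru p ⟨hpT, Or.inl hp1t⟩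
              rw [← e2, Prod.ext_iff] at e1
              omega
            rw [hstk] at hxstk
            rcases List.mem_cons.1 hxstk with h | h
            · exact absurd h hxt
            · exact h
      · -- greedy pushes k; claim p.1 = k
        have hp1k : p.1 = k := by
          rcases hpc with h | h
          · exact h
          · exfalso
            have hp1stk : p.1 ∈ (greedy P comp k).1 := by
              rw [ihS]
              exact ⟨by omega, p.2, hpT, by omega⟩
            have hle : p.1 ≤ t := hmax _ hp1stk
            have hp1t : p.1 = t := by
              by_contra hne
              have hlt : p.1 < t := by omega
              have hunek : u ≠ k := by
                intro he
                have h1 := huk (t, u) htuT (Or.inr he)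
                rw [Prod.ext_iff] at h1
                omega
              exact hnc p hpT (t, u) htuT ⟨hlt, by omega, by omega⟩
            apply hPk
            have hv : P p.2 = comp (P p.1) := hval p hpT
            rw [h, hp1t] at hv
            exact hv
        rw [hg, hstk]
        simp only [hPk, if_false]
        refine ⟨?_, ?_, ?_⟩
        · intro q
          rw [ihL]
          constructor
          · rintro ⟨hq, h2⟩; exact ⟨hq, by omega⟩
          · rintro ⟨hq, h2⟩
            refine ⟨hq, ?_⟩
            rcases Nat.lt_or_ge q.2 k with h | h
            · exact h
            · exfalso
              have hq2k : q.2 = k := by omega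
              have heq := huk q hq (Or.inr hq2k)
              subst heq
              omega
        · intro x
          simp only [List.mem_cons]
          constructor
          · rintro (rfl | hx)
            · refine ⟨by omega, p.2, ?_, by omega⟩
              rw [← hp1k]; exact hpT
            · have hxstk : x ∈ (greedy P comp k).1 := by
                rw [hstk]; simp [hx]
              obtain ⟨hxk, e, heT, he⟩ := (ihS x).1 hxstk
              have hek : e ≠ k := by
                intro he'
                have h1 := huk (x, e) heT (Or.inr he')
                rw [Prod.ext_iff] at h1
                omega
              exact ⟨by omega, e, heT, by omega⟩
          · rintro ⟨hx, e, heT, he⟩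
            rcases Nat.lt_or_ge x k with h | h
            · have hxstk : x ∈ (greedy P comp k).1 := by
                rw [ihS]; exact ⟨h, e, heT, by omega⟩
              rw [hstk] at hxstk
              right
              simpa using hxstk
            · left; omega
        · have hsort := ihSort; rw [hstk] at hsort
          rw [List.pairwise_cons]
          constructor
          · intro x hx
            have hxstk : x ∈ (greedy P comp k).1 := by rw [hstk]; exact hx
            exact ((ihS x).1 hxstk).1
          · exact hsort
theorem non_greedy_tree_has_type2_move {A : Type*} [DecidableEq A]
    (comp : A → A) (hinv : Function.Involutive comp) (hff : ∀ a, comp a ≠ a)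
    (n : ℕ) (P : ℕ → A) (T : Finset (ℕ × ℕ))
    (hT : IsPlaneTree n T) (hval : IsValid P comp T)
    (hne : T ≠ greedyMatching P comp n) :
    ∃ T', IsPlaneTree n T' ∧ ValidType2Move P comp T T' := by
  by_cases hC : Config P comp T
  · exact config_move comp hinv n P T hT hval hC
  · exfalso
    apply hne
    obtain ⟨hL, -, -⟩ := greedy_inv P comp T n hT hval hC (2 * n) le_rfl
    ext p
    rw [greedyMatching, List.mem_toFinset, hL p]
    exact ⟨fun hp => ⟨hp, (hT.1.1 p hp).2⟩, fun h => h.1⟩
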